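/- arXiv:1910.08109 — 3 statements merged into one kernel-verified Lean document; each statement's English description precedes it below -/
import Mathlib

section
/- Let P ≪ Q be probability measures and let ı(y) = log(dP/dQ)(y). Then for any ε ≥ 0, E_{e^ε}(P‖Q) = e^ε ∫_ε^∞ e^{−t} P(ı > t) dt. -/
open MeasureTheory

/-- The `E_γ`-divergence: `sup` over measurable sets `E` of `P(E) - γ Q(E)`. -/
noncomputable def Egamma {α : Type*} [MeasurableSpace α] (γ : ℝ) (P Q : Measure α) : ℝ :=
  ⨆ E : {E : Set α // MeasurableSet E}, ((P E).toReal - γ * (Q E).toReal)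

/-- The information density `ı(y) = log (dP/dQ)(y)`. -/
noncomputable def infoDensity {α : Type*} [MeasurableSpace α] (P Q : Measure α) (y : α) : ℝ :=
  Real.log ((P.rnDeriv Q y).toReal)

section Aux

variable {α : Type*} [MeasurableSpace α] (P Q : Measure α)
  [IsProbabilityMeasure P] [IsProbabilityMeasure Q]

lemma egamma_eq_set (hPQ : P ≪ Q) {γ : ℝ} (hγ : 0 ≤ γ) :
    Egamma γ P Q = (P {y | γ < (P.rnDeriv Q y).toReal}).toReal
      - γ * (Q {y | γ < (P.rnDeriv Q y).toReal}).toReal := by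
  set p : α → ℝ := fun y => (P.rnDeriv Q y).toReal with hp
  have hp_meas : Measurable p := (Measure.measurable_rnDeriv P Q).ennreal_toReal
  set A : Set α := {y | γ < p y} with hA
  have hA_meas : MeasurableSet A := measurableSet_lt measurable_const hp_meas
  have hint : Integrable p Q := Measure.integrable_toReal_rnDeriv
  have hint2 : Integrable (fun y => p y - γ) Q := hint.sub (integrable_const γ)
  have hint3 : Integrable (fun y => max (p y - γ) 0) Q := hint2.pos_part
  have hrepr : ∀ E : Set α, MeasurableSet E →
      (P E).toReal - γ * (Q E).toReal = ∫ y in E, (p y - γ) ∂Q := by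
    intro E hE
    rw [integral_sub hint.integrableOn (integrableOn_const (measure_ne_top Q E))]
    rw [Measure.setIntegral_toReal_rnDeriv hPQ, setIntegral_const]
    simp [smul_eq_mul, mul_comm, Measure.real]
  have hmax : (fun y => max (p y - γ) 0) = A.indicator (fun y => p y - γ) := by
    ext y
    by_cases hy : γ < p y
    · rw [Set.indicator_of_mem (show y ∈ A from hy), max_eq_left (by linarith)]
    · rw [Set.indicator_of_notMem (show y ∉ A from hy),
        max_eq_right (by push_neg at hy; linarith)]
  have hbound : ∀ E : Set α, MeasurableSet E →
      (P E).toReal - γ * (Q E).toReal ≤ (P A).toReal - γ * (Q A).toReal := by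
    intro E hE
    rw [hrepr E hE, hrepr A hA_meas]
    have h1 : ∫ y in E, (p y - γ) ∂Q ≤ ∫ y in E, max (p y - γ) 0 ∂Q :=
      integral_mono hint2.integrableOn hint3.integrableOn fun y => le_max_left _ _
    have h2 : ∫ y in E, max (p y - γ) 0 ∂Q ≤ ∫ y, max (p y - γ) 0 ∂Q :=
      setIntegral_le_integral hint3 (Filter.Eventually.of_forall fun y => le_max_right _ _)
    have h3 : ∫ y, max (p y - γ) 0 ∂Q = ∫ y in A, (p y - γ) ∂Q := by
      rw [hmax, integral_indicator hA_meas]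
    linarith
  have hbdd : BddAbove (Set.range fun E : {E : Set α // MeasurableSet E} =>
      ((P E.1).toReal - γ * (Q E.1).toReal)) := by
    refine ⟨(P A).toReal - γ * (Q A).toReal, ?_⟩
    rintro x ⟨⟨E, hE⟩, rfl⟩
    exact hbound E hE
  refine le_antisymm (ciSup_le ?_) ?_
  · rintro ⟨E, hE⟩
    exact hbound E hE
  · exact le_ciSup hbdd (⟨A, hA_meas⟩ : {E : Set α // MeasurableSet E})

lemma key_lintegral (hPQ : P ≪ Q) (ε : ℝ) (hε : 0 ≤ ε) :
    (ENNReal.ofReal (Real.exp ε) *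
      ∫⁻ t in Set.Ioi ε, P {y | t < infoDensity P Q y} * ENNReal.ofReal (Real.exp (-t))
    = P {y | Real.exp ε < (P.rnDeriv Q y).toReal}
      - ENNReal.ofReal (Real.exp ε) * Q {y | Real.exp ε < (P.rnDeriv Q y).toReal})
    ∧ ENNReal.ofReal (Real.exp ε) * Q {y | Real.exp ε < (P.rnDeriv Q y).toReal}
        ≤ P {y | Real.exp ε < (P.rnDeriv Q y).toReal} := by
  set γ := Real.exp ε with hγdef
  have hγ1 : (1:ℝ) ≤ γ := Real.one_le_exp hε
  have hγ0 : (0:ℝ) < γ := lt_of_lt_of_le one_pos hγ1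
  set p : α → ℝ := fun y => (P.rnDeriv Q y).toReal with hp
  have hp_meas : Measurable p := (Measure.measurable_rnDeriv P Q).ennreal_toReal
  have hp_nn : ∀ y, 0 ≤ p y := fun y => ENNReal.toReal_nonneg
  have hlogp : ∀ y, infoDensity P Q y = Real.log (p y) := fun y => rfl
  have hinfo_meas : Measurable (infoDensity P Q) := Real.measurable_log.comp hp_meas
  set A : Set α := {y | γ < p y} with hA
  have hA_meas : MeasurableSet A := measurableSet_lt measurable_const hp_meas
  set f : α → ℝ := fun ω => max (infoDensity P Q ω - ε) 0 with hf
  have hf_meas : Measurable f := (hinfo_meas.sub measurable_const).max measurable_const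
  -- the a.e. bound on A
  have hle_ae : ∀ᵐ ω ∂(Q.restrict A), ENNReal.ofReal γ ≤ P.rnDeriv Q ω := by
    rw [ae_restrict_iff' hA_meas]
    filter_upwards [Measure.rnDeriv_lt_top P Q] with ω hω hmem
    rw [← ENNReal.ofReal_toReal hω.ne]
    exact ENNReal.ofReal_le_ofReal (le_of_lt hmem)
  have hle : ENNReal.ofReal γ * Q A ≤ P A := by
    have h := lintegral_mono_ae hle_ae
    rwa [setLIntegral_const, Measure.setLIntegral_rnDeriv hPQ] at h
  refine ⟨?_, hle⟩
  -- layer cake formula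
  have hlayer := lintegral_comp_eq_lintegral_meas_lt_mul (μ := P) (f := f)
    (g := fun t => Real.exp (-(t + ε)))
    (Filter.Eventually.of_forall fun ω => le_max_right _ _)
    hf_meas.aemeasurable
    (fun t _ => (Real.continuous_exp.comp (by continuity)).intervalIntegrable 0 t)
    (Filter.Eventually.of_forall fun t => (Real.exp_pos _).le)
  -- translation of the integral
  have h_antitone : Antitone fun t : ℝ => P {y | t < infoDensity P Q y} :=
    fun s t hst => measure_mono fun y hy => lt_of_le_of_lt hst hy
  have hmeas_h : Measurable fun t : ℝ =>
      P {y | t < infoDensity P Q y} * ENNReal.ofReal (Real.exp (-t)) :=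
    h_antitone.measurable.mul
      (ENNReal.measurable_ofReal.comp (Real.measurable_exp.comp measurable_neg))
  have hshift : (∫⁻ t in Set.Ioi ε,
        P {y | t < infoDensity P Q y} * ENNReal.ofReal (Real.exp (-t)))
      = ∫⁻ t in Set.Ioi 0, P {a | t < f a} * ENNReal.ofReal (Real.exp (-(t + ε))) := by
    conv_lhs => rw [← map_add_right_eq_self (volume : Measure ℝ) ε]
    rw [setLIntegral_map measurableSet_Ioi hmeas_h (measurable_add_const ε)]
    rw [show (fun x : ℝ => x + ε) ⁻¹' Set.Ioi ε = Set.Ioi 0 by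
      ext x; simp]
    refine setLIntegral_congr_fun measurableSet_Ioi
      (fun t ht => ?_)
    congr 2
    ext a
    simp only [Set.mem_setOf_eq, hf, lt_max_iff, lt_sub_iff_add_lt]
    constructor
    · intro h; exact Or.inl (by linarith)
    · rintro (h | h)
      · linarith
      · exact absurd h (not_lt.mpr (le_of_lt ht))
  -- inner interval integral
  have hinner : ∀ c : ℝ, ∫ t in (0:ℝ)..c, Real.exp (-(t + ε))
      = Real.exp (-ε) * (1 - Real.exp (-c)) := by
    intro c
    have h1 : Set.EqOn (fun t => Real.exp (-(t + ε)))
        (fun t => Real.exp (-ε) * Real.exp (-t)) (Set.uIcc (0:ℝ) c) := by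
      intro t _
      simp only [← Real.exp_add]
      ring_nf
    rw [intervalIntegral.integral_congr h1, intervalIntegral.integral_const_mul]
    congr 1
    rw [intervalIntegral.integral_comp_neg (fun t => Real.exp t), integral_exp]
    simp
  -- pointwise identification
  have hptA : ∀ ω, ENNReal.ofReal (1 - Real.exp (-(f ω)))
      = A.indicator (fun ω => ENNReal.ofReal (1 - γ / p ω)) ω := by
    intro ω
    by_cases hω : γ < p ω
    · rw [Set.indicator_of_mem (show ω ∈ A from hω)]
      have hpω : 0 < p ω := lt_trans hγ0 hω
      have hlog : ε < infoDensity P Q ω := by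
        have h := Real.log_lt_log hγ0 hω
        rwa [hγdef, Real.log_exp] at h
      rw [show f ω = infoDensity P Q ω - ε from max_eq_left (by linarith)]
      congr 1
      rw [show -(infoDensity P Q ω - ε) = ε + -(infoDensity P Q ω) by ring,
        Real.exp_add, Real.exp_neg, hlogp, Real.exp_log hpω, ← hγdef, div_eq_mul_inv]
    · rw [Set.indicator_of_notMem (show ω ∉ A from hω)]
      push_neg at hω
      have hfω : f ω = 0 := by
        refine max_eq_right (sub_nonpos.mpr ?_)
        rw [hlogp]
        rcases lt_or_ge 0 (p ω) with h0 | h0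
        · have h := Real.log_le_log h0 hω
          rwa [hγdef, Real.log_exp] at h
        · rw [le_antisymm h0 (hp_nn ω), Real.log_zero]
          exact hε
      rw [hfω]
      simp
  have hg_meas : Measurable fun ω => ENNReal.ofReal (1 - γ / p ω) :=
    ENNReal.measurable_ofReal.comp (measurable_const.sub (measurable_const.div hp_meas))
  -- to Q with density
  have htoQ : (∫⁻ ω in A, ENNReal.ofReal (1 - γ / p ω) ∂P)
      = ∫⁻ ω in A, P.rnDeriv Q ω * ENNReal.ofReal (1 - γ / p ω) ∂Q := by
    conv_lhs => rw [← Measure.withDensity_rnDeriv_eq P Q hPQ]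
    exact setLIntegral_withDensity_eq_setLIntegral_mul Q
      (Measure.measurable_rnDeriv P Q) hg_meas hA_meas
  have hae : ∀ᵐ ω ∂(Q.restrict A), P.rnDeriv Q ω * ENNReal.ofReal (1 - γ / p ω)
      = P.rnDeriv Q ω - ENNReal.ofReal γ := by
    rw [ae_restrict_iff' hA_meas]
    filter_upwards [Measure.rnDeriv_lt_top P Q] with ω hω hmem
    have hγp : γ < p ω := hmem
    have hpω : 0 < p ω := lt_trans hγ0 hγp
    have hder : P.rnDeriv Q ω = ENNReal.ofReal (p ω) := (ENNReal.ofReal_toReal hω.ne).symm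
    rw [hder, ← ENNReal.ofReal_mul (hp_nn ω),
      show p ω * (1 - γ / p ω) = p ω - γ by field_simp,
      ENNReal.ofReal_sub _ hγ0.le]
  have hsub : (∫⁻ ω in A, (P.rnDeriv Q ω - ENNReal.ofReal γ) ∂Q)
      = P A - ENNReal.ofReal γ * Q A := by
    rw [lintegral_sub measurable_const
      (by rw [setLIntegral_const]
          exact ENNReal.mul_ne_top ENNReal.ofReal_ne_top (measure_ne_top Q A)) hle_ae]
    rw [Measure.setLIntegral_rnDeriv hPQ, setLIntegral_const]
  calc ENNReal.ofReal γ *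
        ∫⁻ t in Set.Ioi ε, P {y | t < infoDensity P Q y} * ENNReal.ofReal (Real.exp (-t))
      = ENNReal.ofReal γ *
        ∫⁻ t in Set.Ioi 0, P {a | t < f a} * ENNReal.ofReal (Real.exp (-(t + ε))) := by
        rw [hshift]
    _ = ENNReal.ofReal γ *
        ∫⁻ ω, ENNReal.ofReal (∫ t in (0:ℝ)..f ω, Real.exp (-(t + ε))) ∂P := by
        rw [hlayer]
    _ = ∫⁻ ω, ENNReal.ofReal (1 - Real.exp (-(f ω))) ∂P := by
        simp_rw [hinner]
        have hmf : Measurable fun ω => ENNReal.ofReal (Real.exp (-ε) * (1 - Real.exp (-f ω))) :=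
          (measurable_const.mul
            (measurable_const.sub (Real.measurable_exp.comp hf_meas.neg))).ennreal_ofReal
        rw [← lintegral_const_mul (ENNReal.ofReal γ) hmf]
        refine lintegral_congr fun ω => ?_
        rw [← ENNReal.ofReal_mul hγ0.le, ← mul_assoc, hγdef, ← Real.exp_add,
          add_neg_cancel, Real.exp_zero, one_mul]
    _ = ∫⁻ ω in A, ENNReal.ofReal (1 - γ / p ω) ∂P := by
        simp_rw [hptA]
        rw [lintegral_indicator hA_meas]
    _ = ∫⁻ ω in A, P.rnDeriv Q ω * ENNReal.ofReal (1 - γ / p ω) ∂Q := htoQ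
    _ = ∫⁻ ω in A, (P.rnDeriv Q ω - ENNReal.ofReal γ) ∂Q := lintegral_congr_ae hae
    _ = P A - ENNReal.ofReal γ * Q A := hsub

end Aux

/-- Tail distribution formula: `E_{e^ε}(P‖Q) = e^ε ∫_ε^∞ e^{-t} P(ı > t) dt`. -/
theorem egamma_eq_tail_integral {α : Type*} [MeasurableSpace α]
    (P Q : Measure α) [IsProbabilityMeasure P] [IsProbabilityMeasure Q]
    (hPQ : P ≪ Q) (ε : ℝ) (hε : 0 ≤ ε) :
    Egamma (Real.exp ε) P Q
      = Real.exp ε *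
        ∫ t in Set.Ioi ε, Real.exp (-t) * (P {y | t < infoDensity P Q y}).toReal := by
  have hγ0 : (0:ℝ) < Real.exp ε := Real.exp_pos ε
  obtain ⟨hkey, hle⟩ := key_lintegral P Q hPQ ε hε
  set A : Set α := {y | Real.exp ε < (P.rnDeriv Q y).toReal} with hA
  set J := ∫⁻ t in Set.Ioi ε, P {y | t < infoDensity P Q y} * ENNReal.ofReal (Real.exp (-t))
    with hJ
  have h_antitone : Antitone fun t : ℝ => P {y | t < infoDensity P Q y} :=
    fun s t hst => measure_mono fun y hy => lt_of_le_of_lt hst hy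
  have hsm : AEStronglyMeasurable
      (fun t : ℝ => Real.exp (-t) * (P {y | t < infoDensity P Q y}).toReal)
      (volume.restrict (Set.Ioi ε)) :=
    ((Real.measurable_exp.comp measurable_neg).mul
      h_antitone.measurable.ennreal_toReal).aestronglyMeasurable
  have hT : ∫ t in Set.Ioi ε, Real.exp (-t) * (P {y | t < infoDensity P Q y}).toReal
      = J.toReal := by
    rw [integral_eq_lintegral_of_nonneg_ae
      (Filter.Eventually.of_forall fun t => mul_nonneg (Real.exp_pos _).le ENNReal.toReal_nonneg)
      hsm]
    congr 1
    refine lintegral_congr fun t => ?_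
    rw [ENNReal.ofReal_mul (Real.exp_pos _).le, ENNReal.ofReal_toReal (measure_ne_top P _),
      mul_comm]
  rw [egamma_eq_set P Q hPQ hγ0.le, hT,
    show Real.exp ε * J.toReal = (ENNReal.ofReal (Real.exp ε) * J).toReal by
      rw [ENNReal.toReal_mul, ENNReal.toReal_ofReal hγ0.le],
    hkey, ENNReal.toReal_sub_of_le hle (measure_ne_top P A), ENNReal.toReal_mul,
    ENNReal.toReal_ofReal hγ0.le]
end

section
/- For two multivariate Gaussians with common covariance λ²I_r and means μ₁, μ₂, letting β = ‖μ₁ − μ₂‖/λ, one has E_γ(N(μ₁, λ²I_r) ‖ N(μ₂, λ²I_r)) = Q(log γ / β − β/2) − γ Q(log γ / β + β/2), where Q(v) = P(N(0,1) ≥ v). -/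
set_option maxHeartbeats 1000000

open MeasureTheory

/-- The `r`-dimensional Gaussian measure `N(μ, λ² I_r)`, defined by its density with
respect to the Lebesgue measure on `ℝ^r`. -/
noncomputable def gaussianEuclidean {r : ℕ} (μ : EuclideanSpace ℝ (Fin r)) (l : ℝ) :
    Measure (EuclideanSpace ℝ (Fin r)) :=
  volume.withDensity fun x =>
    ENNReal.ofReal
      (Real.rpow (2 * Real.pi * l ^ 2) (-(r : ℝ) / 2) * Real.exp (-‖x - μ‖ ^ 2 / (2 * l ^ 2)))

/-- The standard Gaussian tail function `Q(v) = ∫_v^∞ (1/√(2π)) e^{-t²/2} dt`. -/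
noncomputable def gaussTail (v : ℝ) : ℝ :=
  ∫ t in Set.Ioi v, Real.exp (-t ^ 2 / 2) / Real.sqrt (2 * Real.pi)

section Helpers

open Real Set ProbabilityTheory RealInnerProductSpace

variable {r : ℕ} {l : ℝ}

lemma tail_lemma {l : ℝ} (hl : 0 < l) (m c : ℝ) :
    ∫ t in Set.Ici c, gaussianPDFReal m (⟨l^2, sq_nonneg l⟩ : NNReal) t
      = gaussTail ((c - m)/l) := by
  have hl2 : ((⟨l^2, sq_nonneg l⟩ : NNReal) : ℝ) = l^2 := rfl
  rw [integral_Ici_eq_integral_Ioi]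
  have himg : (fun s => l*s + m) '' Set.Ioi ((c-m)/l) = Set.Ioi c := by
    ext t
    simp only [Set.mem_image, Set.mem_Ioi]
    constructor
    · rintro ⟨s, hs, rfl⟩
      have := (div_lt_iff₀ hl).mp hs
      linarith
    · intro ht
      exact ⟨(t - m)/l, by rw [div_lt_div_iff₀ hl hl]; ring_nf; nlinarith, by field_simp; ring⟩
  rw [← himg, integral_image_eq_integral_abs_deriv_smul measurableSet_Ioi
    (fun x _ => by simpa using (((hasDerivAt_id x).const_mul l).add_const m).hasDerivWithinAt)
    (fun a _ b _ h => by simpa [hl.ne'] using mul_left_cancel₀ hl.ne' (by linarith : l*a = l*b))]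
  unfold gaussTail
  congr 1
  ext s
  unfold gaussianPDFReal
  change |l| • ((√(2 * π * l^2))⁻¹ * rexp (-(l * s + m - m) ^ 2 / (2 * l^2))) = _
  have h2π : (0:ℝ) ≤ 2 * π := by positivity
  rw [show (2 * π * l^2 : ℝ) = (2*π) * l^2 by ring, Real.sqrt_mul h2π, Real.sqrt_sq hl.le]
  have : (l * s + m - m)^2 = s^2 * l^2 := by ring
  rw [this, smul_eq_mul, abs_of_pos hl]
  have hll : l^2 ≠ 0 := by positivity
  have hexp : (-(s^2 * l^2) / (2 * l^2) : ℝ) = -s^2/2 := by field_simp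
  field_simp

variable {r : ℕ} {l : ℝ}

/-- density as product of 1D gaussian pdfs in an orthonormal coordinate system -/
lemma density_prod (hl : 0 < l) (b : OrthonormalBasis (Fin r) ℝ (EuclideanSpace ℝ (Fin r)))
    (m x : EuclideanSpace ℝ (Fin r)) :
    Real.rpow (2 * Real.pi * l ^ 2) (-(r : ℝ) / 2) * Real.exp (-‖x - m‖ ^ 2 / (2 * l ^ 2))
      = ∏ i, gaussianPDFReal (b.repr m i) (⟨l^2, sq_nonneg l⟩ : NNReal) (b.repr x i) := by
  have hA : (0:ℝ) < 2 * π * l^2 := by positivity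
  unfold gaussianPDFReal
  change _ = ∏ i, (√(2 * π * l^2))⁻¹ * rexp (-((b.repr x) i - (b.repr m) i) ^ 2 / (2 * l^2))
  rw [Finset.prod_mul_distrib, Finset.prod_const, ← Real.exp_sum]
  congr 1
  · rw [Real.sqrt_eq_rpow, ← Real.rpow_neg hA.le, ← Real.rpow_natCast _ (Finset.univ.card),
      ← Real.rpow_mul hA.le]
    norm_num
    rw [Real.rpow_def_of_pos hA, Real.rpow_def_of_pos hA]
    ring_nf
  · have hnorm : ‖x - m‖ = ‖b.repr (x - m)‖ := (b.repr.norm_map _).symm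
    have hsq : ‖x - m‖^2 = ∑ i, (b.repr x i - b.repr m i)^2 := by
      rw [hnorm, EuclideanSpace.norm_eq, Real.sq_sqrt (Finset.sum_nonneg fun i _ => sq_nonneg _)]
      refine Finset.sum_congr rfl fun i _ => ?_
      rw [Real.norm_eq_abs, sq_abs, map_sub]
      rfl
    rw [← Finset.sum_div, Finset.sum_neg_distrib, ← hsq]

noncomputable def bequiv {r : ℕ} (b : OrthonormalBasis (Fin r) ℝ (EuclideanSpace ℝ (Fin r))) :
    EuclideanSpace ℝ (Fin r) ≃ᵐ (Fin r → ℝ) :=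
  b.measurableEquiv.trans (MeasurableEquiv.toLp 2 (Fin r → ℝ)).symm

example (b : OrthonormalBasis (Fin r) ℝ (EuclideanSpace ℝ (Fin r)))
    (x : EuclideanSpace ℝ (Fin r)) (i : Fin r) : (bequiv b) x i = b.repr x i := rfl

lemma bequiv_mp (b : OrthonormalBasis (Fin r) ℝ (EuclideanSpace ℝ (Fin r))) :
    MeasurePreserving (bequiv b) volume volume := by
  have := (EuclideanSpace.volume_preserving_symm_measurableEquiv_toLp (Fin r)).comp
    b.measurePreserving_measurableEquiv
  simpa [bequiv, MeasurableEquiv.coe_trans] using this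

lemma integrable_density (hl : 0 < l) (b : OrthonormalBasis (Fin r) ℝ (EuclideanSpace ℝ (Fin r)))
    (m : EuclideanSpace ℝ (Fin r)) :
    Integrable (fun x : EuclideanSpace ℝ (Fin r) =>
      Real.rpow (2 * Real.pi * l ^ 2) (-(r : ℝ) / 2) * Real.exp (-‖x - m‖ ^ 2 / (2 * l ^ 2))) := by
  have hG : Integrable (fun z : Fin r → ℝ =>
      ∏ i, gaussianPDFReal (b.repr m i) (⟨l^2, sq_nonneg l⟩ : NNReal) (z i)) :=
    Integrable.fintype_prod (fun i => integrable_gaussianPDFReal _ _)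
  have := ((bequiv_mp b).integrable_comp_emb (bequiv b).measurableEmbedding).mpr hG
  apply this.congr
  filter_upwards with x
  exact (density_prod hl b m x).symm

lemma density_nonneg (m x : EuclideanSpace ℝ (Fin r)) :
    0 ≤ Real.rpow (2 * Real.pi * l ^ 2) (-(r : ℝ) / 2) * Real.exp (-‖x - m‖ ^ 2 / (2 * l ^ 2)) :=
  mul_nonneg (Real.rpow_nonneg (by positivity) _) (Real.exp_nonneg _)

lemma apply_toReal (hl : 0 < l) (b : OrthonormalBasis (Fin r) ℝ (EuclideanSpace ℝ (Fin r)))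
    (m : EuclideanSpace ℝ (Fin r)) {E : Set (EuclideanSpace ℝ (Fin r))} (hE : MeasurableSet E) :
    (gaussianEuclidean m l E).toReal
      = ∫ x in E, Real.rpow (2 * Real.pi * l ^ 2) (-(r : ℝ) / 2)
          * Real.exp (-‖x - m‖ ^ 2 / (2 * l ^ 2)) := by
  rw [gaussianEuclidean, withDensity_apply _ hE,
    ← ofReal_integral_eq_lintegral_ofReal ((integrable_density hl b m).integrableOn)
      (Filter.Eventually.of_forall fun x => density_nonneg m x),
    ENNReal.toReal_ofReal (integral_nonneg fun x => density_nonneg m x)]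

lemma halfspace_measure [NeZero r] (hl : 0 < l)
    (b : OrthonormalBasis (Fin r) ℝ (EuclideanSpace ℝ (Fin r)))
    (m : EuclideanSpace ℝ (Fin r)) (c : ℝ) :
    (gaussianEuclidean m l {x | c ≤ b.repr x 0}).toReal
      = gaussTail ((c - b.repr m 0)/l) := by
  have hv : (⟨l^2, sq_nonneg l⟩ : NNReal) ≠ 0 := by
    intro h
    exact (pow_ne_zero 2 hl.ne') (congrArg NNReal.toReal h)
  have hcont : Continuous fun x : EuclideanSpace ℝ (Fin r) => b.repr x 0 :=
    (continuous_apply 0).comp ((PiLp.continuous_ofLp 2 _).comp b.repr.continuous)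
  have hS : MeasurableSet {x : EuclideanSpace ℝ (Fin r) | c ≤ b.repr x 0} :=
    (isClosed_le continuous_const hcont).measurableSet
  rw [apply_toReal hl b m hS]
  set v : NNReal := ⟨l^2, sq_nonneg l⟩ with hvdef
  set g : (Fin r → ℝ) → ℝ := fun z => ∏ i, gaussianPDFReal (b.repr m i) v (z i) with hg
  set T : Set (Fin r → ℝ) := {z | c ≤ z 0} with hT
  have hTm : MeasurableSet T := measurableSet_le measurable_const (measurable_pi_apply 0)
  have h1 : ∫ x in {x : EuclideanSpace ℝ (Fin r) | c ≤ b.repr x 0},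
      Real.rpow (2 * Real.pi * l ^ 2) (-(r : ℝ) / 2) * Real.exp (-‖x - m‖ ^ 2 / (2 * l ^ 2))
      = ∫ x in (bequiv b) ⁻¹' T, g ((bequiv b) x) := by
    apply setIntegral_congr_fun
    · exact hS
    · intro x _
      exact density_prod hl b m x
  rw [h1, (bequiv_mp b).setIntegral_preimage_emb (bequiv b).measurableEmbedding g T]
  set h : Fin r → ℝ → ℝ := fun i => if i = 0 then
      Set.indicator (Set.Ici c) (gaussianPDFReal (b.repr m 0) v)
    else gaussianPDFReal (b.repr m i) v with hh
  have h2 : ∫ z in T, g z = ∫ z : Fin r → ℝ, ∏ i, h i (z i) := by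
    rw [← integral_indicator hTm]
    congr 1
    ext z
    by_cases hz : c ≤ z 0
    · rw [Set.indicator_of_mem (show z ∈ T from hz)]
      refine Finset.prod_congr rfl fun i _ => ?_
      by_cases hi : i = 0
      · subst hi
        simp only [hh, if_pos rfl]
        rw [Set.indicator_of_mem (show z 0 ∈ Set.Ici c from hz)]
      · simp only [hh, if_neg hi]
    · rw [Set.indicator_of_notMem (show z ∉ T from hz)]
      symm
      apply Finset.prod_eq_zero (Finset.mem_univ (0 : Fin r))
      simp only [hh, if_pos rfl]
      rw [Set.indicator_of_notMem (show z 0 ∉ Set.Ici c from hz)]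
  rw [h2, volume_pi, MeasureTheory.integral_fintype_prod_eq_prod (f := h)]
  rw [Finset.prod_eq_single (0 : Fin r)
    (fun i _ hi => by simp [hh, hi, integral_gaussianPDFReal_eq_one _ hv])
    (fun hmem => absurd (Finset.mem_univ _) hmem)]
  simp only [hh, if_pos rfl]
  rw [integral_indicator measurableSet_Ici]
  exact tail_lemma hl _ c

lemma opt_lemma {α : Type*} [MeasurableSpace α] {μ : Measure α} {φ : α → ℝ}
    (hφ : Integrable φ μ) {A : Set α} (hA : A = {x | 0 ≤ φ x}) (hAm : MeasurableSet A)
    {E : Set α} (hEm : MeasurableSet E) :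
    ∫ x in E, φ x ∂μ ≤ ∫ x in A, φ x ∂μ := by
  have h1 : ∫ x in E ∩ A, φ x ∂μ + ∫ x in E \ A, φ x ∂μ = ∫ x in E, φ x ∂μ :=
    integral_inter_add_diff hAm hφ.integrableOn
  have h2 : ∫ x in E \ A, φ x ∂μ ≤ 0 := by
    apply setIntegral_nonpos (hEm.diff hAm)
    intro x hx
    have := hx.2
    rw [hA] at this
    simp only [Set.mem_setOf_eq, not_le] at this
    exact this.le
  have h3 : ∫ x in E ∩ A, φ x ∂μ ≤ ∫ x in A, φ x ∂μ := by
    apply setIntegral_mono_set hφ.integrableOn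
    · rw [Filter.EventuallyLE, ae_restrict_iff' hAm]
      filter_upwards with x hx
      rw [hA] at hx
      exact hx
    · exact Filter.Eventually.of_forall fun x hx => hx.2
  linarith


end Helpers

section Main

open Real Set ProbabilityTheory RealInnerProductSpace

/-- `E_γ` between two isotropic Gaussians with common covariance `λ² I_r`:
with `β = ‖μ₁ - μ₂‖/λ`,
`E_γ(N(μ₁,λ²I) ‖ N(μ₂,λ²I)) = Q(log γ/β - β/2) - γ Q(log γ/β + β/2)`. -/
theorem egamma_gaussian_formula {r : ℕ} (γ : ℝ) (hγ : 1 ≤ γ) (l : ℝ) (hl : 0 < l)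
    (μ₁ μ₂ : EuclideanSpace ℝ (Fin r)) (hμ : μ₁ ≠ μ₂) :
    Egamma γ (gaussianEuclidean μ₁ l) (gaussianEuclidean μ₂ l)
      = gaussTail (Real.log γ / (‖μ₁ - μ₂‖ / l) - (‖μ₁ - μ₂‖ / l) / 2)
        - γ * gaussTail (Real.log γ / (‖μ₁ - μ₂‖ / l) + (‖μ₁ - μ₂‖ / l) / 2) := by
  have hγ0 : (0:ℝ) < γ := lt_of_lt_of_le one_pos hγ
  have hr : r ≠ 0 := by rintro rfl; exact hμ (Subsingleton.elim _ _)
  haveI : NeZero r := ⟨hr⟩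
  have hdn : (0:ℝ) < ‖μ₁ - μ₂‖ := by
    rw [norm_pos_iff]; exact sub_ne_zero.mpr hμ
  have hu : ‖(‖μ₁ - μ₂‖⁻¹ • (μ₁ - μ₂) : EuclideanSpace ℝ (Fin r))‖ = 1 := by
    rw [norm_smul, norm_inv, norm_norm, inv_mul_cancel₀ hdn.ne']
  have hON : Orthonormal ℝ (Set.restrict {(0 : Fin r)}
      fun _ => (‖μ₁ - μ₂‖⁻¹ • (μ₁ - μ₂) : EuclideanSpace ℝ (Fin r))) := by
    constructor
    · intro i; exact hu
    · intro i j hij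
      exact absurd (Subtype.ext (i.2.trans j.2.symm)) hij
  obtain ⟨b, hb⟩ := hON.exists_orthonormalBasis_extension_of_card_eq finrank_euclideanSpace
  have hb0 : b 0 = ‖μ₁ - μ₂‖⁻¹ • (μ₁ - μ₂) := hb 0 rfl
  have hrepr : ∀ x : EuclideanSpace ℝ (Fin r),
      b.repr x 0 = ⟪μ₁ - μ₂, x⟫ / ‖μ₁ - μ₂‖ := by
    intro x
    rw [b.repr_apply_apply, hb0, real_inner_smul_left, inv_mul_eq_div]
  set K := Real.rpow (2 * Real.pi * l ^ 2) (-(r : ℝ) / 2) with hK_def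
  have hK : 0 < K := Real.rpow_pos_of_pos (by positivity) _
  set c : ℝ := (l^2 * Real.log γ + (‖μ₁‖^2 - ‖μ₂‖^2)/2) / ‖μ₁ - μ₂‖ with hc_def
  set A : Set (EuclideanSpace ℝ (Fin r)) := {x | c ≤ b.repr x 0} with hA_def
  have hAm : MeasurableSet A :=
    (isClosed_le continuous_const ((continuous_apply 0).comp ((PiLp.continuous_ofLp 2 _).comp b.repr.continuous))).measurableSet
  set φ : EuclideanSpace ℝ (Fin r) → ℝ := fun x =>
    K * Real.exp (-‖x - μ₁‖ ^ 2 / (2 * l ^ 2))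
      - γ * (K * Real.exp (-‖x - μ₂‖ ^ 2 / (2 * l ^ 2))) with hφ_def
  have hφint : Integrable φ :=
    (integrable_density hl b μ₁).sub ((integrable_density hl b μ₂).const_mul γ)
  have hn2 : ‖μ₁ - μ₂‖^2 = ‖μ₁‖^2 - 2*⟪μ₁, μ₂⟫ + ‖μ₂‖^2 := norm_sub_sq_real μ₁ μ₂
  have h2s : (0:ℝ) < 2 * l^2 := by positivity
  have hA_opt : A = {x | 0 ≤ φ x} := by
    ext x
    simp only [hA_def, Set.mem_setOf_eq, hφ_def, sub_nonneg]
    rw [hrepr x,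
      show γ * (K * Real.exp (-‖x - μ₂‖ ^ 2 / (2 * l ^ 2)))
        = K * Real.exp (Real.log γ + -‖x - μ₂‖ ^ 2 / (2 * l ^ 2)) from by
          rw [Real.exp_add, Real.exp_log hγ0]; ring,
      mul_le_mul_iff_of_pos_left hK, Real.exp_le_exp]
    have hkey : ‖x - μ₂‖^2 - ‖x - μ₁‖^2
        = 2*⟪μ₁ - μ₂, x⟫ - (‖μ₁‖^2 - ‖μ₂‖^2) := by
      have h1 := norm_sub_sq_real x μ₁
      have h2 := norm_sub_sq_real x μ₂
      have h3 : ⟪μ₁ - μ₂, x⟫ = ⟪x, μ₁⟫ - ⟪x, μ₂⟫ := by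
        rw [inner_sub_left, real_inner_comm μ₁ x, real_inner_comm μ₂ x]
      linarith
    have hdiv : c ≤ ⟪μ₁ - μ₂, x⟫ / ‖μ₁ - μ₂‖
        ↔ l^2 * Real.log γ + (‖μ₁‖^2 - ‖μ₂‖^2)/2 ≤ ⟪μ₁ - μ₂, x⟫ := by
      rw [hc_def, div_le_div_iff₀ hdn hdn, mul_le_mul_iff_of_pos_right hdn]
    have hdiv2 : Real.log γ + -‖x - μ₂‖^2/(2*l^2) ≤ -‖x - μ₁‖^2/(2*l^2)
        ↔ Real.log γ * (2*l^2) - ‖x - μ₂‖^2 ≤ -‖x - μ₁‖^2 := by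
      rw [show Real.log γ + -‖x - μ₂‖^2/(2*l^2)
          = (Real.log γ * (2*l^2) - ‖x - μ₂‖^2)/(2*l^2) from by field_simp; ring,
        div_le_div_iff₀ h2s h2s, mul_le_mul_iff_of_pos_right h2s]
    rw [hdiv, hdiv2]
    constructor <;> intro <;> linarith
  have harg1 : (c - b.repr μ₁ 0)/l
      = Real.log γ / (‖μ₁ - μ₂‖ / l) - (‖μ₁ - μ₂‖ / l) / 2 := by
    have hip1 : ⟪μ₁ - μ₂, μ₁⟫ = ‖μ₁‖^2 - ⟪μ₁, μ₂⟫ := by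
      rw [inner_sub_left, real_inner_self_eq_norm_sq, real_inner_comm μ₂ μ₁]
    have e1 : l^2*Real.log γ + (‖μ₁‖^2 - ‖μ₂‖^2)/2 - (‖μ₁‖^2 - ⟪μ₁, μ₂⟫)
        = l^2*Real.log γ - ‖μ₁ - μ₂‖^2/2 := by rw [hn2]; ring
    rw [hrepr μ₁, hc_def, hip1, div_sub_div_same, e1, div_div]
    field_simp
  have harg2 : (c - b.repr μ₂ 0)/l
      = Real.log γ / (‖μ₁ - μ₂‖ / l) + (‖μ₁ - μ₂‖ / l) / 2 := by
    have hip2 : ⟪μ₁ - μ₂, μ₂⟫ = ⟪μ₁, μ₂⟫ - ‖μ₂‖^2 := by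
      rw [inner_sub_left, real_inner_self_eq_norm_sq]
    have e2 : l^2*Real.log γ + (‖μ₁‖^2 - ‖μ₂‖^2)/2 - (⟪μ₁, μ₂⟫ - ‖μ₂‖^2)
        = l^2*Real.log γ + ‖μ₁ - μ₂‖^2/2 := by rw [hn2]; ring
    rw [hrepr μ₂, hc_def, hip2, div_sub_div_same, e2, div_div]
    field_simp
  have htrans : ∀ (S : Set (EuclideanSpace ℝ (Fin r))), MeasurableSet S →
      (gaussianEuclidean μ₁ l S).toReal - γ * (gaussianEuclidean μ₂ l S).toReal
        = ∫ x in S, φ x := by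
    intro S hS
    rw [apply_toReal hl b μ₁ hS, apply_toReal hl b μ₂ hS]
    simp only [hφ_def]
    rw [integral_sub ((integrable_density hl b μ₁).integrableOn)
        (((integrable_density hl b μ₂).const_mul γ).integrableOn),
      integral_const_mul γ]
  have hval : ∀ E : {E : Set (EuclideanSpace ℝ (Fin r)) // MeasurableSet E},
      (gaussianEuclidean μ₁ l ↑E).toReal - γ * (gaussianEuclidean μ₂ l ↑E).toReal
        ≤ (gaussianEuclidean μ₁ l A).toReal - γ * (gaussianEuclidean μ₂ l A).toReal := by
    rintro ⟨E, hE⟩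
    rw [htrans E hE, htrans A hAm]
    exact opt_lemma hφint hA_opt hAm hE
  have hAval : (gaussianEuclidean μ₁ l A).toReal - γ * (gaussianEuclidean μ₂ l A).toReal
      = gaussTail (Real.log γ / (‖μ₁ - μ₂‖ / l) - (‖μ₁ - μ₂‖ / l) / 2)
        - γ * gaussTail (Real.log γ / (‖μ₁ - μ₂‖ / l) + (‖μ₁ - μ₂‖ / l) / 2) := by
    rw [hA_def, halfspace_measure hl b μ₁ c, halfspace_measure hl b μ₂ c, harg1, harg2]
  rw [Egamma]
  apply le_antisymm
  · exact ciSup_le fun E => le_of_le_of_eq (hval E) hAval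
  · have hbdd : BddAbove (Set.range fun E : {E : Set (EuclideanSpace ℝ (Fin r)) // MeasurableSet E} =>
        ((gaussianEuclidean μ₁ l ↑E).toReal - γ * (gaussianEuclidean μ₂ l ↑E).toReal)) := by
      refine ⟨(gaussianEuclidean μ₁ l A).toReal - γ * (gaussianEuclidean μ₂ l A).toReal, ?_⟩
      rintro x ⟨E, rfl⟩
      exact hval E
    have h := le_ciSup hbdd
      (⟨A, hAm⟩ : {E : Set (EuclideanSpace ℝ (Fin r)) // MeasurableSet E})
    exact le_trans (le_of_eq hAval.symm) h

end Main
end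

section
/- For one-dimensional Gaussians, the map a ↦ E_γ(N(a, λ²) ‖ N(0, λ²)) is non-decreasing in a ≥ 0 for each fixed λ > 0 and γ ≥ 1. -/
open MeasureTheory ProbabilityTheory
open scoped NNReal ENNReal Real

lemma egamma_aux_bddAbove {α : Type*} [MeasurableSpace α] (γ : ℝ) (hγ : 0 ≤ γ)
    (P Q : Measure α) [IsProbabilityMeasure P] :
    BddAbove (Set.range fun E : {E : Set α // MeasurableSet E} =>
      ((P E).toReal - γ * (Q E).toReal)) := by
  refine ⟨1, ?_⟩
  rintro x ⟨E, rfl⟩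
  have h1 : (P E).toReal ≤ 1 := by
    have := measure_mono (μ := P) (Set.subset_univ (E : Set α))
    rw [measure_univ] at this
    exact ENNReal.toReal_le_of_le_ofReal zero_le_one (by simpa using this)
  have h2 : 0 ≤ γ * (Q E).toReal := mul_nonneg hγ ENNReal.toReal_nonneg
  simp only
  linarith

lemma egamma_aux_nonneg {α : Type*} [MeasurableSpace α] (γ : ℝ) (hγ : 0 ≤ γ)
    (P Q : Measure α) [IsProbabilityMeasure P] : 0 ≤ Egamma γ P Q := by
  have h := le_ciSup (egamma_aux_bddAbove γ hγ P Q) ⟨∅, MeasurableSet.empty⟩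
  simpa [Egamma] using h

lemma gauss_toReal (m : ℝ) {v : ℝ≥0} (hv : v ≠ 0) (A : Set ℝ) (hA : MeasurableSet A) :
    ((gaussianReal m v) A).toReal = ∫ x in A, gaussianPDFReal m v x := by
  rw [gaussianReal_apply_eq_integral m hv, ENNReal.toReal_ofReal]
  exact setIntegral_nonneg hA fun x _ => gaussianPDFReal_nonneg _ _ _

/-- For one-dimensional Gaussians with fixed variance `λ²`, the map
`a ↦ E_γ(N(a, λ²) ‖ N(0, λ²))` is non-decreasing in `a ≥ 0`. -/
theorem egamma_gaussian_monotone (γ : ℝ) (hγ : 1 ≤ γ) (l : NNReal) (hl : 0 < l)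
    (a b : ℝ) (ha : 0 ≤ a) (hab : a ≤ b) :
    Egamma γ (gaussianReal a (l ^ 2)) (gaussianReal 0 (l ^ 2))
      ≤ Egamma γ (gaussianReal b (l ^ 2)) (gaussianReal 0 (l ^ 2)) := by
  have hγ0 : (0:ℝ) < γ := lt_of_lt_of_le one_pos hγ
  haveI : Nonempty {E : Set ℝ // MeasurableSet E} := ⟨⟨∅, MeasurableSet.empty⟩⟩
  set v : ℝ≥0 := l ^ 2 with hv_def
  have hv : v ≠ 0 := pow_ne_zero _ (ne_of_gt hl)
  have hv' : (0:ℝ) < (v : ℝ) := by positivity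
  have hlog : 0 ≤ Real.log γ := Real.log_nonneg hγ
  rcases eq_or_lt_of_le ha with h0 | hapos
  · -- a = 0 : the divergence is ≤ 0 = value at ∅ ≤ RHS
    rw [← h0]
    have hle : Egamma γ (gaussianReal 0 v) (gaussianReal 0 v) ≤ 0 := by
      refine ciSup_le fun E => ?_
      have : ((gaussianReal 0 v) E).toReal ≤ γ * ((gaussianReal 0 v) E).toReal :=
        le_mul_of_one_le_left ENNReal.toReal_nonneg hγ
      linarith
    exact hle.trans (egamma_aux_nonneg γ (le_of_lt hγ0) _ _)
  · -- a > 0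
    set t : ℝ := (2 * (v:ℝ) * Real.log γ + a ^ 2) / (2 * a) with ht_def
    have h2a : (0:ℝ) < 2 * a := by linarith
    have ht0 : 0 ≤ t := div_nonneg (by nlinarith) (le_of_lt h2a)
    set d : ℝ := b - a with hd_def
    have hd : 0 ≤ d := by simp [hd_def]; linarith
    set f : ℝ → ℝ := fun x => gaussianPDFReal a v x - γ * gaussianPDFReal 0 v x with hf_def
    have hfi : Integrable f :=
      (integrable_gaussianPDFReal a v).sub ((integrable_gaussianPDFReal 0 v).const_mul γ)
    -- sign of f
    have key : ∀ x : ℝ, γ * gaussianPDFReal 0 v x ≤ gaussianPDFReal a v x ↔ t ≤ x := by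
      intro x
      rw [gaussianPDFReal, gaussianPDFReal]
      set c : ℝ := (√(2 * Real.pi * (v:ℝ)))⁻¹ with hc
      have hcpos : 0 < c := by
        rw [hc]
        positivity
      rw [show γ * (c * Real.exp (-(x - 0) ^ 2 / (2 * (v:ℝ)))) =
          c * (γ * Real.exp (-(x - 0) ^ 2 / (2 * (v:ℝ)))) by ring,
        mul_le_mul_iff_right₀ hcpos,
        ← Real.log_le_log_iff (by positivity) (Real.exp_pos _),
        Real.log_mul (ne_of_gt hγ0) (ne_of_gt (Real.exp_pos _)), Real.log_exp, Real.log_exp]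
      have h2v : (0:ℝ) < 2 * (v:ℝ) := by linarith
      have hiff : Real.log γ + -(x - 0) ^ 2 / (2 * (v:ℝ)) ≤ -(x - a) ^ 2 / (2 * (v:ℝ))
          ↔ 2 * (v:ℝ) * Real.log γ + a ^ 2 ≤ x * (2 * a) := by
        rw [← sub_nonneg, show -(x - a) ^ 2 / (2 * (v:ℝ))
              - (Real.log γ + -(x - 0) ^ 2 / (2 * (v:ℝ)))
            = (x * (2 * a) - (2 * (v:ℝ) * Real.log γ + a ^ 2)) / (2 * (v:ℝ)) by
              field_simp; ring,
          le_div_iff₀ h2v, zero_mul]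
        constructor <;> intro h <;> linarith
      rw [hiff, ht_def, div_le_iff₀ h2a]
    -- value as an integral of f
    have hval : ∀ (A : Set ℝ), MeasurableSet A →
        ((gaussianReal a v) A).toReal - γ * ((gaussianReal 0 v) A).toReal = ∫ x in A, f x := by
      intro A hA
      rw [gauss_toReal a hv A hA, gauss_toReal 0 hv A hA, hf_def]
      rw [integral_sub ((integrable_gaussianPDFReal a v).integrableOn)
        (((integrable_gaussianPDFReal 0 v).const_mul γ).integrableOn), integral_const_mul]
    -- the half-line is optimal
    have hS : MeasurableSet (Set.Ici t) := measurableSet_Ici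
    have hopt : ∀ (A : Set ℝ), MeasurableSet A →
        ∫ x in A, f x ≤ ∫ x in Set.Ici t, f x := by
      intro A hA
      have hdecA : ∫ x in A, f x
          = (∫ x in A ∩ Set.Ici t, f x) + ∫ x in A \ Set.Ici t, f x :=
        (integral_inter_add_diff (μ := (volume : Measure ℝ)) (s := A) (t := Set.Ici t)
          hS hfi.integrableOn).symm
      have hdecS : ∫ x in Set.Ici t, f x
          = (∫ x in A ∩ Set.Ici t, f x) + ∫ x in Set.Ici t \ A, f x := by
        rw [Set.inter_comm]
        exact (integral_inter_add_diff (μ := (volume : Measure ℝ)) (s := Set.Ici t) (t := A)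
          hA hfi.integrableOn).symm
      have hpos : 0 ≤ ∫ x in Set.Ici t \ A, f x := by
        refine setIntegral_nonneg (hS.diff hA) fun x hx => ?_
        have := (key x).mpr hx.1
        simp only [hf_def]
        linarith
      have hneg : ∫ x in A \ Set.Ici t, f x ≤ 0 := by
        refine setIntegral_nonpos (hA.diff hS) fun x hx => ?_
        have hx2 : ¬ t ≤ x := hx.2
        have : gaussianPDFReal a v x ≤ γ * gaussianPDFReal 0 v x :=
          le_of_not_ge fun h => hx2 ((key x).mp h)
        simp only [hf_def]
        linarith
      rw [hdecA, hdecS]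
      exact add_le_add le_rfl (hneg.trans hpos)
    -- translation of the half-line
    have hmap : (gaussianReal b v) (Set.Ici (t + d)) = (gaussianReal a v) (Set.Ici t) := by
      have hb : a + d = b := by simp [hd_def]
      rw [← hb, ← gaussianReal_map_add_const d,
        Measure.map_apply (measurable_add_const d) measurableSet_Ici]
      congr 1
      ext x
      simp only [Set.mem_preimage, Set.mem_Ici]
      constructor <;> intro h <;> linarith
    have hmono : (gaussianReal 0 v) (Set.Ici (t + d)) ≤ (gaussianReal 0 v) (Set.Ici t) :=
      measure_mono (Set.Ici_subset_Ici.mpr (by linarith))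
    have hmono' : ((gaussianReal 0 v) (Set.Ici (t + d))).toReal
        ≤ ((gaussianReal 0 v) (Set.Ici t)).toReal :=
      ENNReal.toReal_mono (measure_ne_top _ _) hmono
    -- put everything together
    have step1 : Egamma γ (gaussianReal a v) (gaussianReal 0 v)
        ≤ ((gaussianReal a v) (Set.Ici t)).toReal - γ * ((gaussianReal 0 v) (Set.Ici t)).toReal := by
      refine ciSup_le fun E => ?_
      rw [hval E E.2, hval (Set.Ici t) hS]
      exact hopt E E.2
    have step2 : ((gaussianReal a v) (Set.Ici t)).toReal
          - γ * ((gaussianReal 0 v) (Set.Ici t)).toReal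
        ≤ ((gaussianReal b v) (Set.Ici (t + d))).toReal
          - γ * ((gaussianReal 0 v) (Set.Ici (t + d))).toReal := by
      rw [hmap]
      have := mul_le_mul_of_nonneg_left hmono' (le_of_lt hγ0)
      linarith
    have step3 : ((gaussianReal b v) (Set.Ici (t + d))).toReal
          - γ * ((gaussianReal 0 v) (Set.Ici (t + d))).toReal
        ≤ Egamma γ (gaussianReal b v) (gaussianReal 0 v) :=
      le_ciSup (egamma_aux_bddAbove γ (le_of_lt hγ0) _ _) ⟨Set.Ici (t + d), measurableSet_Ici⟩
    exact step1.trans (step2.trans step3)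
end
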